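/- Let c, m be positive integers, L a real c×c matrix, and Z a real m×c matrix. Suppose ρ : Fin c → ℝ is a strictly positive vector such that the kernel of the linear map v ↦ L *ᵥ v equals the span of ρ. Then there exists μ : Fin m → ℝ with L *ᵥ (fun i => Real.exp ((Zᵀ *ᵥ μ) i)) = 0 if and only if there exist w : Fin m → ℝ and b : ℝ such that for all i, Real.log (ρ i) = (Zᵀ *ᵥ w) i + b. (Complex balancing holds if and only if Ln ρ ∈ im Zᵀ + span 𝟙; connected-graph case of Theorem 1.) -/
import Mathlib


open Matrix

theorem complex_balanced_iff_log_rho_in_im_Zt_plus_span_ones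
    (c m : ℕ) (hc : 0 < c) (hm : 0 < m)
    (L : Matrix (Fin c) (Fin c) ℝ)
    (Z : Matrix (Fin m) (Fin c) ℝ)
    (ρ : Fin c → ℝ) (hρ : ∀ i, 0 < ρ i)
    (hker : LinearMap.ker L.mulVecLin = Submodule.span ℝ {ρ}) :
    (∃ μ : Fin m → ℝ, L *ᵥ (fun i => Real.exp ((Zᵀ *ᵥ μ) i)) = 0) ↔
      ∃ (w : Fin m → ℝ) (b : ℝ), ∀ i, Real.log (ρ i) = (Zᵀ *ᵥ w) i + b := by
  constructor
  · rintro ⟨μ, hμ⟩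
    have hmem : (fun i => Real.exp ((Zᵀ *ᵥ μ) i)) ∈ LinearMap.ker L.mulVecLin := by
      simpa [LinearMap.mem_ker] using hμ
    rw [hker, Submodule.mem_span_singleton] at hmem
    obtain ⟨t, ht⟩ := hmem
    have hti : ∀ i, t * ρ i = Real.exp ((Zᵀ *ᵥ μ) i) := by
      intro i
      have := congrFun ht i
      simpa [Pi.smul_apply, smul_eq_mul] using this
    have htpos : 0 < t := by
      have h := hti ⟨0, hc⟩
      nlinarith [Real.exp_pos ((Zᵀ *ᵥ μ) ⟨0, hc⟩), hρ ⟨0, hc⟩]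
    refine ⟨μ, -Real.log t, fun i => ?_⟩
    have hρi : ρ i = Real.exp ((Zᵀ *ᵥ μ) i) / t := by
      field_simp [ne_of_gt htpos]
      linarith [hti i]
    rw [hρi, Real.log_div (Real.exp_ne_zero _) (ne_of_gt htpos), Real.log_exp]
    ring
  · rintro ⟨w, b, hw⟩
    refine ⟨w, ?_⟩
    have hkey : (fun i => Real.exp ((Zᵀ *ᵥ w) i)) = Real.exp (-b) • ρ := by
      funext i
      have : (Zᵀ *ᵥ w) i = Real.log (ρ i) - b := by linarith [hw i]
      rw [this, Pi.smul_apply, smul_eq_mul, Real.exp_sub, Real.exp_log (hρ i)]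
      rw [Real.exp_neg]; ring
    have hmem : (fun i => Real.exp ((Zᵀ *ᵥ w) i)) ∈ LinearMap.ker L.mulVecLin := by
      rw [hker, hkey]
      exact Submodule.smul_mem _ _ (Submodule.mem_span_singleton_self ρ)
    simpa [LinearMap.mem_ker] using hmem
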